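/- Let the message alphabet be binary, M = {0,1}, and consider a deterministic node-oblivious internal rule f: M^k → M whose dependence graph is not strongly connected, say with no edge from 0 to 1 (so that f(α) = 1 for every α ≠ (0, 0, …, 0)). Then for every node i at level τ and under either hypothesis s ∈ {0,1}, P(σ_i = 0 | s) ≤ exp(−c·k^τ) for some constant c > 0 (depending on the leaf rule and signal distributions), so that this probability tends to 0 doubly-exponentially in τ; consequently the root error probability P(σ_root ≠ s) is bounded away from 0 uniformly in t. -/

import Mathlib

/-!
Node-oblivious deterministic decision rules on the `k`-ary tree: every leaf applies the
same rule `g : X → M` to its private signal (i.i.d. with law `p₀` under `s = 0` and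
`p₁` under `s = 1`, both everywhere positive on the finite set `X`), every internal
non-root node applies the same rule `f : Mᵏ → M` to its children's messages, and the
root applies `h : Mᵏ → Bool`.  The state of the world `s` is uniform on `{0,1}`.

We formalize the subexponential lower bound on the error probability under the three
irreducibility assumptions, in terms of the diameter `d` of the dependence graph.
-/

/-- `p` is an everywhere-positive probability distribution on the finite set `X`. -/
def IsPositiveDist {X : Type} [Fintype X] (p : X → ℝ) : Prop :=
  (∀ x, 0 < p x) ∧ ∑ x, p x = 1

/-- Message distribution at a node of level `τ` (distance `τ` from the leaves) for the
node-oblivious deterministic rule vector with leaf rule `g` and internal rule `f`,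
when the private signals are i.i.d. with law `p`. -/
noncomputable def oblDist {X M : Type} [Fintype X] [Fintype M] [DecidableEq M] {k : ℕ}
    (p : X → ℝ) (g : X → M) (f : (Fin k → M) → M) : ℕ → M → ℝ
  | 0, μ => ∑ x, if g x = μ then p x else 0
  | τ + 1, μ => ∑ σ : Fin k → M, if f σ = μ then ∏ i, oblDist p g f τ (σ i) else 0

/-- Root error probability `P(σ_root ≠ s)` (uniform prior on `s`) for the
node-oblivious protocol `(f, g, h)`; the root's children are at level `t`, so the
total depth is `t + 1` and there are `n = k^(t+1)` private signals. -/
noncomputable def oblErr {X M : Type} [Fintype X] [Fintype M] [DecidableEq M] {k : ℕ}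
    (p₀ p₁ : X → ℝ) (g : X → M) (f : (Fin k → M) → M) (h : (Fin k → M) → Bool)
    (t : ℕ) : ℝ :=
  (1 / 2) * (∑ σ : Fin k → M, if h σ = true then ∏ i, oblDist p₀ g f t (σ i) else 0) +
  (1 / 2) * (∑ σ : Fin k → M, if h σ = false then ∏ i, oblDist p₁ g f t (σ i) else 0)

/-- The dependence graph of `f`: there is a directed edge from `μ` to `ν` iff there is
an input vector `α ∈ Mᵏ` in which `ν` appears at least once and `f α = μ`. -/
def DepEdge {M : Type} {k : ℕ} (f : (Fin k → M) → M) (μ ν : M) : Prop :=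
  ∃ α : Fin k → M, (∃ i, α i = ν) ∧ f α = μ

/-- `HasPath f n μ ν`: the dependence graph of `f` contains a directed path with
exactly `n` edges from `μ` to `ν`. -/
def HasPath {M : Type} {k : ℕ} (f : (Fin k → M) → M) : ℕ → M → M → Prop
  | 0, μ, ν => μ = ν
  | n + 1, μ, ν => ∃ ξ, DepEdge f μ ξ ∧ HasPath f n ξ ν

/-- `d` is the diameter of the dependence graph of `f`: every ordered pair of distinct
vertices is joined by a directed path of length at most `d`, and some ordered pair of
distinct vertices has no directed path of length less than `d`. -/
def IsDiameter {M : Type} {k : ℕ} (f : (Fin k → M) → M) (d : ℕ) : Prop :=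
  (∀ μ ν : M, μ ≠ ν → ∃ n, n ≤ d ∧ HasPath f n μ ν) ∧
  (∃ μ ν : M, μ ≠ ν ∧ ∀ n, n < d → ¬HasPath f n μ ν)

section Aux

variable {X : Type} [Fintype X] {k : ℕ} (p : X → ℝ) (g : X → Bool)
  (f : (Fin k → Bool) → Bool)

lemma oblDist_nonneg (hp : ∀ x, 0 ≤ p x) : ∀ τ μ, 0 ≤ oblDist p g f τ μ := by
  intro τ
  induction τ with
  | zero =>
    intro μ
    apply Finset.sum_nonneg
    intro x _
    split <;> simp [hp x]
  | succ τ ih =>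
    intro μ
    apply Finset.sum_nonneg
    intro σ _
    split
    · exact Finset.prod_nonneg fun i _ => ih (σ i)
    · exact le_refl 0

lemma oblDist_sum_one (hp : ∑ x, p x = 1) :
    ∀ τ, oblDist p g f τ false + oblDist p g f τ true = 1 := by
  intro τ
  induction τ with
  | zero =>
    simp only [oblDist]
    rw [← Finset.sum_add_distrib]
    rw [← hp]
    apply Finset.sum_congr rfl
    intro x _
    cases hx : g x <;> simp
  | succ τ ih =>
    simp only [oblDist]
    rw [← Finset.sum_add_distrib]
    have : ∀ σ : Fin k → Bool,
        ((if f σ = false then ∏ i, oblDist p g f τ (σ i) else 0) +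
         (if f σ = true then ∏ i, oblDist p g f τ (σ i) else 0)) =
        ∏ i, oblDist p g f τ (σ i) := by
      intro σ; cases hσ : f σ <;> simp
    rw [Finset.sum_congr rfl fun σ _ => this σ]
    have := Fintype.sum_pow (fun b : Bool => oblDist p g f τ b) k
    rw [← this]
    have hs : oblDist p g f τ true + oblDist p g f τ false = 1 := by linarith
    simp [hs]

lemma oblDist_succ_false_le (hf : ∀ α : Fin k → Bool, α ≠ (fun _ => false) → f α = true)
    (hp : ∀ x, 0 ≤ p x) (τ : ℕ) :
    oblDist p g f (τ + 1) false ≤ (oblDist p g f τ false) ^ k := by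
  have hq : 0 ≤ oblDist p g f τ false := oblDist_nonneg p g f hp τ false
  simp only [oblDist]
  rw [Finset.sum_eq_single (fun _ : Fin k => false)]
  · split
    · simp [Finset.prod_const]
    · positivity
  · intro σ _ hσ
    rw [hf σ hσ]; simp
  · intro hmem; exact absurd (Finset.mem_univ _) hmem

end Aux

/-- **Failure of strong connectivity for binary messages.**  Let the message alphabet
be binary (`M = Bool`, with `0 = false` and `1 = true`) and consider a deterministic
node-oblivious rule vector `(f, g, h)` with non-constant leaf rule `g` and
everywhere-positive signal distributions, such that the dependence graph of `f` has no
edge from `0` to `1`.  Then: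
(a) `f α = 1` for every `α ≠ (0, …, 0)`;
(b) there is a constant `c > 0` (depending on the leaf rule and the signal
distributions) such that for every level `τ` and under either hypothesis `s`,
`P(σ_i = 0 | s) ≤ exp (-c k^τ)` — so this probability tends to `0`
doubly-exponentially in `τ`; and
(c) consequently the root error probability is bounded away from `0` uniformly in the
depth. -/

theorem binary_not_strongly_connected_error_bounded_away
    (X : Type) [Fintype X] {k : ℕ} (hk : 1 ≤ k)
    (p₀ p₁ : X → ℝ) (hp₀ : IsPositiveDist p₀) (hp₁ : IsPositiveDist p₁)
    (g : X → Bool) (hg : ∃ x y, g x ≠ g y)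
    (f : (Fin k → Bool) → Bool) (h : (Fin k → Bool) → Bool)
    (hedge : ¬DepEdge f false true) :
    (∀ α : Fin k → Bool, α ≠ (fun _ => false) → f α = true) ∧
    (∃ c : ℝ, 0 < c ∧ ∀ τ : ℕ, ∀ s : Bool,
      oblDist (if s then p₁ else p₀) g f τ false ≤ Real.exp (-c * (k : ℝ) ^ τ)) ∧
    (∃ ε : ℝ, 0 < ε ∧ ∀ t : ℕ, ε ≤ oblErr p₀ p₁ g f h t) := by
  -- part (a)
  have ha : ∀ α : Fin k → Bool, α ≠ (fun _ => false) → f α = true := by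
    intro α hα
    by_contra hfa
    have hfa' : f α = false := by
      cases hv : f α
      · rfl
      · exact absurd hv hfa
    apply hedge
    refine ⟨α, ?_, hfa'⟩
    by_contra hno
    push_neg at hno
    apply hα
    funext i
    cases hv : α i
    · rfl
    · exact absurd hv (hno i)
  -- a signal mapping to false and one mapping to true
  obtain ⟨x, y, hxy⟩ := hg
  have hx01 : ∃ x₀ x₁, g x₀ = false ∧ g x₁ = true := by
    cases hgx : g x <;> cases hgy : g y
    · exact absurd (hgx.trans hgy.symm) hxy
    · exact ⟨x, y, hgx, hgy⟩
    · exact ⟨y, x, hgy, hgx⟩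
    · exact absurd (hgx.trans hgy.symm) hxy
  obtain ⟨x₀, x₁, hx₀, hx₁⟩ := hx01
  -- bounds on the level-0 false-probability
  have hq0 : ∀ p : X → ℝ, IsPositiveDist p →
      0 < oblDist p g f 0 false ∧ oblDist p g f 0 false < 1 := by
    intro p hp
    have hb : ∀ b : Bool, ∀ z : X, g z = b →
        p z ≤ oblDist p g f 0 b := by
      intro b z hz
      show p z ≤ ∑ x, if g x = b then p x else 0
      have := Finset.single_le_sum (f := fun x => if g x = b then p x else 0)
        (fun x _ => by try dsimp only
                       split <;> simp [le_of_lt (hp.1 x)]) (Finset.mem_univ z)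
      simpa [hz] using this
    have h0 : 0 < oblDist p g f 0 false := lt_of_lt_of_le (hp.1 x₀) (hb false x₀ hx₀)
    have h1 : 0 < oblDist p g f 0 true := lt_of_lt_of_le (hp.1 x₁) (hb true x₁ hx₁)
    have hsum := oblDist_sum_one p g f hp.2 0
    exact ⟨h0, by linarith⟩
  obtain ⟨hq0₀, hq1₀⟩ := hq0 p₀ hp₀
  obtain ⟨hq0₁, hq1₁⟩ := hq0 p₁ hp₁
  set c : ℝ := min (-Real.log (oblDist p₀ g f 0 false)) (-Real.log (oblDist p₁ g f 0 false))
    with hc_def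
  have hc : 0 < c := by
    apply lt_min
    · linarith [Real.log_neg hq0₀ hq1₀]
    · linarith [Real.log_neg hq0₁ hq1₁]
  have hinit : ∀ p : X → ℝ, IsPositiveDist p →
      c ≤ -Real.log (oblDist p g f 0 false) →
      oblDist p g f 0 false ≤ Real.exp (-c) := by
    intro p hp hcle
    calc oblDist p g f 0 false
        = Real.exp (Real.log (oblDist p g f 0 false)) :=
          (Real.exp_log (hq0 p hp).1).symm
      _ ≤ Real.exp (-c) := Real.exp_le_exp.mpr (by linarith)
  have hbound : ∀ p : X → ℝ, IsPositiveDist p →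
      oblDist p g f 0 false ≤ Real.exp (-c) →
      ∀ τ : ℕ, oblDist p g f τ false ≤ Real.exp (-c * (k : ℝ) ^ τ) := by
    intro p hp h0 τ
    induction τ with
    | zero => simpa using h0
    | succ τ ih =>
      have hnn : ∀ x, 0 ≤ p x := fun x => le_of_lt (hp.1 x)
      calc oblDist p g f (τ + 1) false
          ≤ (oblDist p g f τ false) ^ k := oblDist_succ_false_le p g f ha hnn τ
        _ ≤ (Real.exp (-c * (k : ℝ) ^ τ)) ^ k :=
            pow_le_pow_left₀ (oblDist_nonneg p g f hnn τ false) ih k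
        _ = Real.exp (-c * (k : ℝ) ^ (τ + 1)) := by
            rw [← Real.exp_nat_mul]
            congr 1
            push_cast
            ring
  have hbound₀ := hbound p₀ hp₀ (hinit p₀ hp₀ (min_le_left _ _))
  have hbound₁ := hbound p₁ hp₁ (hinit p₁ hp₁ (min_le_right _ _))
  refine ⟨ha, ⟨c, hc, ?_⟩, ?_⟩
  · intro τ s
    cases s
    · simpa using hbound₀ τ
    · simpa using hbound₁ τ
  -- part (c)
  have hexp1 : Real.exp (-c) < 1 := by
    have : Real.exp (-c) < Real.exp 0 := Real.exp_lt_exp.mpr (by linarith)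
    simpa using this
  refine ⟨(1 / 2) * (1 - Real.exp (-c)) ^ k,
    mul_pos (by norm_num) (pow_pos (by linarith) k), ?_⟩
  intro t
  have htrue : ∀ p : X → ℝ, IsPositiveDist p →
      (∀ τ, oblDist p g f τ false ≤ Real.exp (-c * (k : ℝ) ^ τ)) →
      1 - Real.exp (-c) ≤ oblDist p g f t true := by
    intro p hp hb
    have hsum := oblDist_sum_one p g f hp.2 t
    have hk1 : (1 : ℝ) ≤ (k : ℝ) ^ t := one_le_pow₀ (by exact_mod_cast hk)
    have : Real.exp (-c * (k : ℝ) ^ t) ≤ Real.exp (-c) := by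
      apply Real.exp_le_exp.mpr
      nlinarith
    linarith [hb t]
  have ht₀ := htrue p₀ hp₀ hbound₀
  have ht₁ := htrue p₁ hp₁ hbound₁
  have he : 0 ≤ 1 - Real.exp (-c) := by linarith
  unfold oblErr
  have hSnn : ∀ (p : X → ℝ), IsPositiveDist p → ∀ b : Bool,
      0 ≤ ∑ σ : Fin k → Bool, if h σ = b then ∏ i, oblDist p g f t (σ i) else 0 := by
    intro p hp b
    apply Finset.sum_nonneg
    intro σ _
    split
    · exact Finset.prod_nonneg fun i _ =>
        oblDist_nonneg p g f (fun x => le_of_lt (hp.1 x)) t (σ i)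
    · exact le_refl 0
  have key : ∀ (p : X → ℝ), IsPositiveDist p →
      (1 - Real.exp (-c) ≤ oblDist p g f t true) → ∀ b : Bool, h (fun _ => true) = b →
      (1 - Real.exp (-c)) ^ k ≤
        ∑ σ : Fin k → Bool, if h σ = b then ∏ i, oblDist p g f t (σ i) else 0 := by
    intro p hp hbt b hv
    have hterm := Finset.single_le_sum
      (f := fun σ : Fin k → Bool => if h σ = b then ∏ i, oblDist p g f t (σ i) else 0)
      (fun σ _ => by
        try dsimp only
        split
        · exact Finset.prod_nonneg fun i _ =>
            oblDist_nonneg p g f (fun x => le_of_lt (hp.1 x)) t (σ i)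
        · exact le_refl 0)
      (Finset.mem_univ (fun _ : Fin k => true))
    try dsimp only at hterm
    rw [if_pos hv] at hterm
    calc (1 - Real.exp (-c)) ^ k
        ≤ (oblDist p g f t true) ^ k := pow_le_pow_left₀ he hbt k
      _ = ∏ _i : Fin k, oblDist p g f t true := by simp [Finset.prod_const]
      _ ≤ _ := hterm
  cases hv : h (fun _ => true)
  · have h2 := key p₁ hp₁ ht₁ false hv
    have h0 := hSnn p₀ hp₀ true
    linarith
  · have h2 := key p₀ hp₀ ht₀ true hv
    have h1 := hSnn p₁ hp₁ false
    linarith
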